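/- Let Ω ⊂ ℝ^N be a measurable set of finite positive Lebesgue measure, f : ℝ → ℝ satisfy (f1)–(f5), h = f⁻¹, p' = p/(p−1), and let T : L^{p'}(Ω) → L^{p}(Ω) be a bounded linear operator that is symmetric, strictly positive, and positivity-improving. Define M = {w ∈ L^{p'}(Ω) : w⁺ ≠ 0, w⁻ ≠ 0, ∫_Ω h(w) w⁺ dx = ∫_Ω w⁺·Tw dx, ∫_Ω h(w) w⁻ dx = ∫_Ω w⁻·Tw dx}. If v ∈ L^{p'}(Ω) satisfies v⁺ ≠ 0, v⁻ ≠ 0, ∫_Ω h(v) v⁺ dx − ∫_Ω v⁺·Tv dx ≤ 0 and ∫_Ω h(v) v⁻ dx − ∫_Ω v⁻·Tv dx ≤ 0, then there exist t, s ∈ (0, 1] such that t v⁺ + s v⁻ ∈ M. -/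

import Mathlib

open Set Filter MeasureTheory
open scoped ENNReal

lemma key_real (A B : ℝ → ℝ) (α β γ : ℝ)
    (hAcont : ∀ t ∈ Set.Ioc (0:ℝ) 1, ContinuousAt A t)
    (hBcont : ∀ s ∈ Set.Ioc (0:ℝ) 1, ContinuousAt B s)
    (hBmono : ∀ s₁ ∈ Set.Ioc (0:ℝ) 1, ∀ s₂ ∈ Set.Ioc (0:ℝ) 1, s₁ < s₂ → B s₂ / s₂ < B s₁ / s₁)
    (hBpos : ∀ s ∈ Set.Ioc (0:ℝ) 1, 0 ≤ B s)
    (hβ : β < 0) (hA1 : A 1 ≤ α + β) (hB1 : B 1 ≤ γ + β)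
    (hAbig : ∃ t₁ ∈ Set.Ioo (0:ℝ) 1, α < A t₁ / t₁) :
    ∃ t ∈ Set.Ioc (0:ℝ) 1, ∃ s ∈ Set.Ioc (0:ℝ) 1,
      A t = t * α + s * β ∧ B s = s * γ + t * β := by
  have hβ' : (0:ℝ) < -β := by linarith
  set Φ : ℝ → ℝ → ℝ := fun t s => B s / s - γ - t * β / s with hΦdef
  have hΦanti : ∀ t ∈ Set.Ioc (0:ℝ) 1, ∀ s₁ ∈ Set.Ioc (0:ℝ) 1, ∀ s₂ ∈ Set.Ioc (0:ℝ) 1,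
      s₁ < s₂ → Φ t s₂ < Φ t s₁ := by
    intro t ht s₁ hs₁ s₂ hs₂ h12
    have h1 : B s₂ / s₂ < B s₁ / s₁ := hBmono s₁ hs₁ s₂ hs₂ h12
    have h2 : -(t * β) / s₂ < -(t * β) / s₁ := by
      apply div_lt_div_of_pos_left _ hs₁.1 h12
      nlinarith [ht.1]
    have e : ∀ s : ℝ, Φ t s = B s / s - γ + -(t*β)/s := by
      intro s; simp [hΦdef]; ring
    rw [e s₁, e s₂]; linarith
  -- existence of root
  have hroot : ∀ t ∈ Set.Ioc (0:ℝ) 1, ∃ s ∈ Set.Ioc (0:ℝ) 1, Φ t s = 0 := by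
    intro t ht
    set s₀ : ℝ := min (1/2) (t * (-β) / (|γ| + 1)) with hs₀def
    have hγ1 : (0:ℝ) < |γ| + 1 := by positivity
    have htβ : 0 < t * (-β) := mul_pos ht.1 hβ'
    have hs₀pos : 0 < s₀ := lt_min (by norm_num) (by positivity)
    have hs₀le : s₀ ≤ 1 := le_trans (min_le_left _ _) (by norm_num)
    have hs₀mem : s₀ ∈ Set.Ioc (0:ℝ) 1 := ⟨hs₀pos, hs₀le⟩
    have hΦs₀ : 0 < Φ t s₀ := by
      have h1 : |γ| + 1 ≤ t * (-β) / s₀ := by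
        rw [le_div_iff₀ hs₀pos]
        calc (|γ| + 1) * s₀ ≤ (|γ| + 1) * (t * (-β) / (|γ| + 1)) := by
              apply mul_le_mul_of_nonneg_left (min_le_right _ _) (le_of_lt hγ1)
          _ = t * (-β) := by field_simp
      have h2 : 0 ≤ B s₀ / s₀ := div_nonneg (hBpos s₀ hs₀mem) hs₀pos.le
      have e : Φ t s₀ = B s₀ / s₀ - γ + t * (-β) / s₀ := by simp [hΦdef]; ring
      have : γ ≤ |γ| := le_abs_self γ
      rw [e]; linarith
    have hΦ1 : Φ t 1 ≤ 0 := by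
      have e : Φ t 1 = B 1 - γ - t * β := by simp [hΦdef]
      nlinarith [ht.2, ht.1]
    have hcont : ContinuousOn (Φ t) (Set.Icc s₀ 1) := by
      have hsub : Set.Icc s₀ 1 ⊆ Set.Ioc (0:ℝ) 1 := fun x hx => ⟨lt_of_lt_of_le hs₀pos hx.1, hx.2⟩
      intro s hs
      have hsmem := hsub hs
      have hBc : ContinuousWithinAt B (Set.Icc s₀ 1) s := (hBcont s hsmem).continuousWithinAt
      have hid : ContinuousWithinAt (fun s : ℝ => s) (Set.Icc s₀ 1) s := continuousWithinAt_id
      have hs0 : s ≠ 0 := ne_of_gt hsmem.1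
      exact ((hBc.div hid hs0).sub continuousWithinAt_const).sub
        ((continuousWithinAt_const.mul continuousWithinAt_const).div hid hs0)
    have hmem : (0:ℝ) ∈ Set.Icc (Φ t 1) (Φ t s₀) := ⟨hΦ1, hΦs₀.le⟩
    obtain ⟨s, hsmem, hs⟩ := intermediate_value_Icc' hs₀le hcont hmem
    exact ⟨s, ⟨lt_of_lt_of_le hs₀pos hsmem.1, hsmem.2⟩, hs⟩
  classical
  set σ : ℝ → ℝ := fun t => if ht : t ∈ Set.Ioc (0:ℝ) 1 then (hroot t ht).choose else 1 with hσdef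
  have hσmem : ∀ t (ht : t ∈ Set.Ioc (0:ℝ) 1), σ t ∈ Set.Ioc (0:ℝ) 1 := by
    intro t ht; rw [hσdef]; simp only [dif_pos ht]
    exact (hroot t ht).choose_spec.1
  have hσroot : ∀ t (ht : t ∈ Set.Ioc (0:ℝ) 1), Φ t (σ t) = 0 := by
    intro t ht; rw [hσdef]; simp only [dif_pos ht]
    exact (hroot t ht).choose_spec.2
  have hlt : ∀ t (ht : t ∈ Set.Ioc (0:ℝ) 1), ∀ s ∈ Set.Ioc (0:ℝ) 1, 0 < Φ t s → s < σ t := by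
    intro t ht s hs hΦs
    rcases lt_trichotomy s (σ t) with h | h | h
    · exact h
    · exfalso; rw [h, hσroot t ht] at hΦs; exact lt_irrefl 0 hΦs
    · exfalso
      have := hΦanti t ht (σ t) (hσmem t ht) s hs h
      rw [hσroot t ht] at this; linarith
  have hgt : ∀ t (ht : t ∈ Set.Ioc (0:ℝ) 1), ∀ s ∈ Set.Ioc (0:ℝ) 1, Φ t s < 0 → σ t < s := by
    intro t ht s hs hΦs
    rcases lt_trichotomy (σ t) s with h | h | h
    · exact h
    · exfalso; rw [← h, hσroot t ht] at hΦs; exact lt_irrefl 0 hΦs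
    · exfalso
      have := hΦanti t ht s hs (σ t) (hσmem t ht) h
      rw [hσroot t ht] at this; linarith
  obtain ⟨t₁, ht₁, hAt₁⟩ := hAbig
  have ht₁mem : t₁ ∈ Set.Ioc (0:ℝ) 1 := ⟨ht₁.1, ht₁.2.le⟩
  have hIccsub : Set.Icc t₁ 1 ⊆ Set.Ioc (0:ℝ) 1 := fun x hx => ⟨lt_of_lt_of_le ht₁.1 hx.1, hx.2⟩
  have hΦshift : ∀ t t' s : ℝ, s ≠ 0 → Φ t' s = Φ t s - (t' - t) * β / s := by
    intro t t' s hs; simp only [hΦdef]; field_simp; ring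
  -- continuity of σ
  have hσcont : ContinuousOn σ (Set.Icc t₁ 1) := by
    rw [Metric.continuousOn_iff]
    intro t₀ ht₀ ε hε
    have ht₀mem := hIccsub ht₀
    have hs₀mem := hσmem t₀ ht₀mem
    have hlow : ∃ δ₁ > 0, ∀ t ∈ Set.Ioc (0:ℝ) 1, |t - t₀| < δ₁ → σ t₀ - ε < σ t := by
      by_cases hcase : σ t₀ ≤ ε
      · exact ⟨1, by norm_num, fun t ht _ => by
          have := (hσmem t ht).1; linarith⟩
      · push_neg at hcase
        obtain ⟨s', hs'def⟩ : ∃ s', s' = σ t₀ - ε/2 := ⟨_, rfl⟩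
        have hs'mem : s' ∈ Set.Ioc (0:ℝ) 1 := ⟨by linarith, by linarith [hs₀mem.2]⟩
        have ha : 0 < Φ t₀ s' := by
          have := hΦanti t₀ ht₀mem s' hs'mem (σ t₀) hs₀mem (by linarith)
          rw [hσroot t₀ ht₀mem] at this; linarith
        refine ⟨Φ t₀ s' * s' / (-β), div_pos (mul_pos ha hs'mem.1) hβ', fun t ht hd => ?_⟩
        have hd' : |t - t₀| * (-β) < Φ t₀ s' * s' := by
          rw [lt_div_iff₀ hβ'] at hd; exact hd
        have habs : (t - t₀) * β ≤ |t - t₀| * (-β) := by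
          calc (t - t₀) * β ≤ |(t - t₀) * β| := le_abs_self _
            _ = |t - t₀| * (-β) := by rw [abs_mul, abs_of_neg hβ]
        have hΦts' : 0 < Φ t s' := by
          rw [hΦshift t₀ t s' (ne_of_gt hs'mem.1)]
          have : (t - t₀) * β / s' < Φ t₀ s' := by
            rw [div_lt_iff₀ hs'mem.1]; nlinarith [hs'mem.1]
          linarith
        have := hlt t ht s' hs'mem hΦts'
        linarith
    have hhigh : ∃ δ₂ > 0, ∀ t ∈ Set.Ioc (0:ℝ) 1, |t - t₀| < δ₂ → σ t < σ t₀ + ε := by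
      by_cases hcase : 1 < σ t₀ + ε/2
      · exact ⟨1, by norm_num, fun t ht _ => by
          have := (hσmem t ht).2; linarith⟩
      · push_neg at hcase
        obtain ⟨s'', hs''def⟩ : ∃ s'', s'' = σ t₀ + ε/2 := ⟨_, rfl⟩
        have hs''mem : s'' ∈ Set.Ioc (0:ℝ) 1 := ⟨by linarith [hs₀mem.1], by linarith⟩
        have hb : Φ t₀ s'' < 0 := by
          have := hΦanti t₀ ht₀mem (σ t₀) hs₀mem s'' hs''mem (by linarith)
          rw [hσroot t₀ ht₀mem] at this; linarith
        refine ⟨(-Φ t₀ s'') * s'' / (-β), div_pos (mul_pos (by linarith) hs''mem.1) hβ',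
          fun t ht hd => ?_⟩
        have hd' : |t - t₀| * (-β) < (-Φ t₀ s'') * s'' := by
          rw [lt_div_iff₀ hβ'] at hd; exact hd
        have habs : -((t - t₀) * β) ≤ |t - t₀| * (-β) := by
          calc -((t - t₀) * β) ≤ |(t - t₀) * β| := neg_le_abs _
            _ = |t - t₀| * (-β) := by rw [abs_mul, abs_of_neg hβ]
        have hΦts'' : Φ t s'' < 0 := by
          rw [hΦshift t₀ t s'' (ne_of_gt hs''mem.1)]
          have : Φ t₀ s'' < (t - t₀) * β / s'' := by
            rw [lt_div_iff₀ hs''mem.1]; nlinarith [hs''mem.1]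
          linarith
        have := hgt t ht s'' hs''mem hΦts''
        linarith
    obtain ⟨δ₁, hδ₁, h₁⟩ := hlow
    obtain ⟨δ₂, hδ₂, h₂⟩ := hhigh
    refine ⟨min δ₁ δ₂, lt_min hδ₁ hδ₂, fun t ht hd => ?_⟩
    have htmem := hIccsub ht
    rw [Real.dist_eq] at hd
    have hd₁ : |t - t₀| < δ₁ := lt_of_lt_of_le hd (min_le_left _ _)
    have hd₂ : |t - t₀| < δ₂ := lt_of_lt_of_le hd (min_le_right _ _)
    rw [Real.dist_eq, abs_sub_lt_iff]
    constructor
    · linarith [h₂ t htmem hd₂]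
    · linarith [h₁ t htmem hd₁]
  -- Ψ and IVT
  set Ψ : ℝ → ℝ := fun t => A t / t - α - σ t * β / t with hΨdef
  have hΨcont : ContinuousOn Ψ (Set.Icc t₁ 1) := by
    intro t ht
    have htmem := hIccsub ht
    have hAc : ContinuousWithinAt A (Set.Icc t₁ 1) t := (hAcont t htmem).continuousWithinAt
    have hid : ContinuousWithinAt (fun s : ℝ => s) (Set.Icc t₁ 1) t := continuousWithinAt_id
    have ht0 : t ≠ 0 := ne_of_gt htmem.1
    exact ((hAc.div hid ht0).sub continuousWithinAt_const).sub
      (((hσcont t ht).mul continuousWithinAt_const).div hid ht0)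
  have hΨ1 : Ψ 1 ≤ 0 := by
    have h1 : (1:ℝ) ∈ Set.Ioc (0:ℝ) 1 := ⟨one_pos, le_refl 1⟩
    have hσ1 := (hσmem 1 h1).2
    have hσ1' := (hσmem 1 h1).1
    simp only [hΨdef, div_one]
    nlinarith
  have hΨt₁ : 0 < Ψ t₁ := by
    have hσt₁ := (hσmem t₁ ht₁mem).1
    have h2 : 0 < σ t₁ * (-β) / t₁ := div_pos (mul_pos hσt₁ hβ') ht₁.1
    simp only [hΨdef]
    have : σ t₁ * β / t₁ = -(σ t₁ * (-β) / t₁) := by ring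
    rw [this]; linarith
  have hmem0 : (0:ℝ) ∈ Set.Icc (Ψ 1) (Ψ t₁) := ⟨hΨ1, hΨt₁.le⟩
  obtain ⟨t, htmem, hΨt⟩ := intermediate_value_Icc' ht₁.2.le hΨcont hmem0
  have htIoc : t ∈ Set.Ioc (0:ℝ) 1 := hIccsub htmem
  refine ⟨t, htIoc, σ t, hσmem t htIoc, ?_, ?_⟩
  · have ht0 : t ≠ 0 := ne_of_gt htIoc.1
    simp only [hΨdef] at hΨt
    field_simp at hΨt
    linarith
  · have hroot' := hσroot t htIoc
    have hs0 : σ t ≠ 0 := ne_of_gt (hσmem t htIoc).1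
    simp only [hΦdef] at hroot'
    field_simp at hroot'
    linarith

section hfacts
variable {f h : ℝ → ℝ} {c₀ p b₀ q : ℝ}

lemma my_f_strictMono (hf1 : ContDiff ℝ 1 f) (hf01 : f 0 = 0)
    (hb₀ : 0 < b₀) (hq2 : 2 < q)
    (hf4 : Filter.Tendsto (fun t : ℝ => f t / t ^ (q - 1)) (nhdsWithin 0 (Set.Ioi 0)) (nhds b₀))
    (hhf : Function.LeftInverse h f) : StrictMono f := by
  have hcont : Continuous f := hf1.continuous
  have hinj : Function.Injective f := hhf.injective
  rcases hcont.strictMono_of_inj hinj with hm | ha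
  · exact hm
  · exfalso
    have hev : ∀ᶠ t in nhdsWithin 0 (Set.Ioi 0), b₀/2 < f t / t ^ (q-1) :=
      hf4.eventually (eventually_gt_nhds (half_lt_self hb₀))
    have hev2 : ∀ᶠ t in nhdsWithin 0 (Set.Ioi 0), t ∈ Set.Ioi (0:ℝ) :=
      eventually_mem_nhdsWithin
    obtain ⟨t, h1, h2⟩ := (hev.and hev2).exists
    have htpos : (0:ℝ) < t := h2
    have hrp : (0:ℝ) < t ^ (q-1) := Real.rpow_pos_of_pos htpos _
    have hfpos : 0 < f t := by
      have : 0 < f t / t ^ (q-1) := lt_trans (by positivity) h1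
      have := mul_pos this hrp
      rwa [div_mul_cancel₀ _ (ne_of_gt hrp)] at this
    have := ha htpos
    rw [hf01] at this
    linarith

lemma my_h_strictMono_cont (hfm : StrictMono f)
    (hhf : Function.LeftInverse h f) (hfh : Function.RightInverse h f) :
    StrictMono h ∧ Continuous h := by
  have hsurj : Function.Surjective f := hfh.surjective
  let e : ℝ ≃o ℝ := StrictMono.orderIsoOfSurjective f hfm hsurj
  have he : ∀ σ : ℝ, h σ = e.symm σ := by
    intro σ
    apply hfm.injective
    rw [hfh σ]
    have : e (e.symm σ) = σ := e.apply_symm_apply σ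
    exact this.symm
  have hh : h = fun σ => e.symm σ := funext he
  constructor
  · rw [hh]; exact fun a b hab => e.symm.strictMono hab
  · rw [hh]; exact e.symm.continuous

lemma my_h_odd (hf2 : ∀ t : ℝ, f (-t) = - f t) (hfm : StrictMono f)
    (hhf : Function.LeftInverse h f) (hfh : Function.RightInverse h f) :
    ∀ σ : ℝ, h (-σ) = - h σ := by
  intro σ
  apply hfm.injective
  rw [hfh, hf2, hfh]

lemma my_h_zero (hf01 : f 0 = 0) (hhf : Function.LeftInverse h f) : h 0 = 0 := by
  conv_lhs => rw [← hf01]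
  exact hhf 0

lemma my_h_ratio (hf5 : StrictMonoOn (fun t : ℝ => f t / t) (Set.Ioi 0))
    (hfm : StrictMono f) (hf01 : f 0 = 0)
    (hhf : Function.LeftInverse h f) (hfh : Function.RightInverse h f) :
    ∀ σ₁ σ₂ : ℝ, 0 < σ₁ → σ₁ < σ₂ → h σ₂ / σ₂ < h σ₁ / σ₁ := by
  have hm := (my_h_strictMono_cont hfm hhf hfh).1
  have h0 := my_h_zero hf01 hhf
  intro σ₁ σ₂ h1 h12
  have ht₁ : 0 < h σ₁ := by
    have := hm h1; rwa [h0] at this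
  have ht₂ : 0 < h σ₂ := lt_trans ht₁ (hm h12)
  have hlt := hf5 (Set.mem_Ioi.mpr ht₁) (Set.mem_Ioi.mpr (lt_trans ht₁ (hm h12))) (hm h12)
  simp only at hlt
  rw [hfh, hfh] at hlt
  rw [div_lt_div_iff₀ ht₁ ht₂] at hlt
  rw [div_lt_div_iff₀ (lt_trans h1 h12) h1]
  nlinarith

lemma my_h_growth (hc₀ : 0 < c₀) (hp : 2 < p)
    (hf3 : Filter.Tendsto (fun t : ℝ => f t / t ^ (p - 1)) Filter.atTop (nhds c₀))
    (hfh : Function.RightInverse h f) :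
    ∃ C₁ C₂ : ℝ, 0 ≤ C₁ ∧ 0 ≤ C₂ ∧ ∀ σ : ℝ, 0 ≤ σ → h σ ≤ C₁ + C₂ * σ ^ (1/(p-1)) := by
  have hev : ∀ᶠ t in Filter.atTop, c₀/2 < f t / t ^ (p-1) :=
    hf3.eventually (eventually_gt_nhds (half_lt_self hc₀))
  obtain ⟨T₀, hT₀⟩ := Filter.eventually_atTop.mp hev
  set r : ℝ := 1/(p-1) with hr
  have hp1 : (0:ℝ) < p - 1 := by linarith
  have hrpos : 0 < r := by rw [hr]; positivity
  refine ⟨max T₀ 1, (2/c₀) ^ r, le_trans zero_le_one (le_max_right _ _), Real.rpow_nonneg (by positivity) _, ?_⟩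
  intro σ hσ
  have hC₂σ : 0 ≤ (2/c₀) ^ r * σ ^ r :=
    mul_nonneg (Real.rpow_nonneg (by positivity) _) (Real.rpow_nonneg hσ _)
  by_cases hcase : h σ ≤ max T₀ 1
  · linarith
  · push_neg at hcase
    set t := h σ with htdef
    have htT₀ : T₀ ≤ t := le_trans (le_max_left _ _) hcase.le
    have ht1 : (1:ℝ) < t := lt_of_le_of_lt (le_max_right _ _) hcase
    have htpos : 0 < t := by linarith
    have hft := hT₀ t htT₀
    have hrp : (0:ℝ) < t ^ (p-1) := Real.rpow_pos_of_pos htpos _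
    have hfσ : f t = σ := hfh σ
    rw [hfσ] at hft
    have h1' : c₀/2 * t ^ (p-1) < σ := (lt_div_iff₀ hrp).mp hft
    have h2 : t ^ (p-1) < 2/c₀ * σ := by
      have h3 := mul_lt_mul_of_pos_left h1' (show (0:ℝ) < 2/c₀ by positivity)
      calc t ^ (p-1) = 2/c₀ * (c₀/2 * t ^ (p-1)) := by field_simp
        _ < 2/c₀ * σ := h3
    have heq : (t ^ (p-1)) ^ r = t := by
      rw [← Real.rpow_mul htpos.le, hr, mul_one_div, div_self (ne_of_gt hp1), Real.rpow_one]
    have hmax : (0:ℝ) ≤ max T₀ 1 := le_trans zero_le_one (le_max_right _ _)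
    have hfin : h σ ≤ (2/c₀) ^ r * σ ^ r := by
      calc h σ = (t ^ (p-1)) ^ r := heq.symm
        _ ≤ (2/c₀ * σ) ^ r := Real.rpow_le_rpow hrp.le h2.le hrpos.le
        _ = (2/c₀) ^ r * σ ^ r := Real.mul_rpow (by positivity) hσ
    linarith

end hfacts

section hinf
variable {f h : ℝ → ℝ} {b₀ q : ℝ}

lemma my_f_small (hb₀ : 0 < b₀) (hq2 : 2 < q)
    (hf4 : Filter.Tendsto (fun t : ℝ => f t / t ^ (q - 1)) (nhdsWithin 0 (Set.Ioi 0)) (nhds b₀)) :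
    ∀ ε : ℝ, 0 < ε → ∃ δ' > 0, ∀ t : ℝ, 0 < t → t < δ' → f t ≤ ε * t := by
  intro ε hε
  have hb1 : (0:ℝ) < b₀ + 1 := by linarith
  have hev : ∀ᶠ t in nhdsWithin 0 (Set.Ioi 0), f t / t ^ (q-1) < b₀ + 1 :=
    hf4.eventually (eventually_lt_nhds (lt_add_one b₀))
  rw [eventually_nhdsWithin_iff] at hev
  rw [Metric.eventually_nhds_iff] at hev
  obtain ⟨δ₀, hδ₀, hev⟩ := hev
  set X : ℝ := (ε/(b₀+1)) ^ (1/(q-2)) with hX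
  have hXpos : 0 < X := Real.rpow_pos_of_pos (by positivity) _
  refine ⟨min δ₀ X, lt_min hδ₀ hXpos, fun t ht htδ => ?_⟩
  have ht0 : t < δ₀ := lt_of_lt_of_le htδ (min_le_left _ _)
  have htX : t ≤ X := le_of_lt (lt_of_lt_of_le htδ (min_le_right _ _))
  have hdist : dist t 0 < δ₀ := by
    rw [Real.dist_eq, sub_zero, abs_of_pos ht]; exact ht0
  have h1 : f t / t ^ (q-1) < b₀ + 1 := hev hdist (Set.mem_Ioi.mpr ht)
  have hrp : (0:ℝ) < t ^ (q-1) := Real.rpow_pos_of_pos ht _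
  have h1' : f t < (b₀+1) * t ^ (q-1) := by
    have := (div_lt_iff₀ hrp).mp h1
    linarith [this]
  have hsplit : t ^ (q-1) = t * t ^ (q-2) := by
    have he : q - 1 = 1 + (q-2) := by ring
    rw [he, Real.rpow_add ht, Real.rpow_one]
  have h2 : t ^ (q-2) ≤ ε/(b₀+1) := by
    have hle := Real.rpow_le_rpow ht.le htX (by linarith : (0:ℝ) ≤ q - 2)
    rwa [hX, ← Real.rpow_mul (by positivity), one_div, inv_mul_cancel₀ (by linarith : q - 2 ≠ 0),
      Real.rpow_one] at hle
  refine le_of_lt ?_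
  calc f t < (b₀+1) * (t * t ^ (q-2)) := by rw [← hsplit]; exact h1'
    _ ≤ (b₀+1) * (t * (ε/(b₀+1))) :=
        mul_le_mul_of_nonneg_left (mul_le_mul_of_nonneg_left h2 ht.le) hb1.le
    _ = ε * t := by field_simp

lemma my_h_large (hb₀ : 0 < b₀) (hq2 : 2 < q)
    (hf4 : Filter.Tendsto (fun t : ℝ => f t / t ^ (q - 1)) (nhdsWithin 0 (Set.Ioi 0)) (nhds b₀))
    (hfm : StrictMono f) (hf01 : f 0 = 0)
    (hhf : Function.LeftInverse h f) (hfh : Function.RightInverse h f) :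
    ∀ M : ℝ, 0 < M → ∃ δ > 0, ∀ τ : ℝ, 0 < τ → τ < δ → M * τ ≤ h τ := by
  intro M hM
  obtain ⟨δ', hδ', hsml⟩ := my_f_small hb₀ hq2 hf4 (1/M) (by positivity)
  have hm := (my_h_strictMono_cont hfm hhf hfh).1
  have h0 := my_h_zero hf01 hhf
  refine ⟨f (δ'/2), by rw [← hf01]; exact hfm (by positivity), fun τ hτ hτδ => ?_⟩
  have ht : 0 < h τ := by
    have := hm hτ; rwa [h0] at this
  have ht2 : h τ < δ'/2 := by
    have := hm hτδ; rwa [hhf] at this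
  have hfle : f (h τ) ≤ (1/M) * h τ := hsml (h τ) ht (by linarith)
  rw [hfh] at hfle
  calc M * τ ≤ M * ((1/M) * h τ) := mul_le_mul_of_nonneg_left hfle hM.le
    _ = h τ := by field_simp

end hinf

section meas
variable {X : Type*} [MeasurableSpace X] {μ : Measure X} [IsFiniteMeasure μ]
variable {h : ℝ → ℝ} {p : ℝ} {C₁ C₂ : ℝ} {g : X → ℝ}

lemma my_holder {F G : X → ℝ} (hp : 2 < p)
    (hF : MemLp F (ENNReal.ofReal (p/(p-1))) μ) (hG : MemLp G (ENNReal.ofReal p) μ) :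
    Integrable (fun x => F x * G x) μ := by
  have hp1 : (0:ℝ) < p - 1 := by linarith
  have hppos : (0:ℝ) < p := by linarith
  have hp'pos : (0:ℝ) < p/(p-1) := by positivity
  have hconj : 1/(1 : ℝ≥0∞) = 1/(ENNReal.ofReal (p/(p-1))) + 1/(ENNReal.ofReal p) := by
    rw [one_div, one_div, one_div, ← ENNReal.ofReal_inv_of_pos hp'pos,
      ← ENNReal.ofReal_inv_of_pos hppos, ← ENNReal.ofReal_add (by positivity) (by positivity)]
    have : (p/(p-1))⁻¹ + p⁻¹ = 1 := by field_simp; ring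
    rw [this, ENNReal.ofReal_one, inv_one]
  have := (haveI : ENNReal.HolderTriple (ENNReal.ofReal (p/(p-1))) (ENNReal.ofReal p) 1 :=
    ⟨by simpa only [one_div] using hconj.symm⟩; hG.smul (𝕜 := ℝ) hF (r := 1))
  rw [memLp_one_iff_integrable] at this
  exact this

lemma my_int (hp : 2 < p)
    (hcont : Continuous h) (hmono : StrictMono h) (h0 : h 0 = 0)
    (hC₁ : 0 ≤ C₁) (hC₂ : 0 ≤ C₂)
    (hgrow : ∀ σ : ℝ, 0 ≤ σ → h σ ≤ C₁ + C₂ * σ ^ (1/(p-1)))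
    (hgm : AEStronglyMeasurable g μ) (hgnn : ∀ x, 0 ≤ g x)
    (hgmem : MemLp g (ENNReal.ofReal (p/(p-1))) μ) :
    ∀ c : ℝ, 0 ≤ c → Integrable (fun x => h (c * g x) * g x) μ := by
  intro c hc
  have hp1 : (0:ℝ) < p - 1 := by linarith
  set r : ℝ := 1/(p-1) with hr
  set p' : ℝ := p/(p-1) with hp'
  have hp'1 : 1 < p' := by rw [hp', lt_div_iff₀ hp1]; linarith
  have hp'pos : (0:ℝ) < p' := by linarith
  have hrpos : (0:ℝ) < r := by rw [hr]; positivity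
  have hone : (1:ℝ≥0∞) ≤ ENNReal.ofReal p' := by
    rw [← ENNReal.ofReal_one]; exact ENNReal.ofReal_le_ofReal hp'1.le
  have hint_g : Integrable g μ := hgmem.integrable hone
  have hint_gp : Integrable (fun x => g x ^ p') μ := by
    have h1 := hgmem.integrable_norm_rpow (by simp [ENNReal.ofReal_eq_zero]; linarith)
      ENNReal.ofReal_ne_top
    rw [ENNReal.toReal_ofReal hp'pos.le] at h1
    refine h1.congr (Filter.Eventually.of_forall fun x => ?_)
    show ‖g x‖ ^ p' = g x ^ p'
    rw [Real.norm_eq_abs, abs_of_nonneg (hgnn x)]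
  have hbound_int : Integrable (fun x => C₁ * g x + (C₂ * c ^ r) * g x ^ p') μ :=
    (hint_g.const_mul C₁).add (hint_gp.const_mul _)
  have hmeas : AEStronglyMeasurable (fun x => h (c * g x) * g x) μ :=
    (hcont.comp_aestronglyMeasurable (hgm.const_mul c)).mul hgm
  refine hbound_int.mono' hmeas (Filter.Eventually.of_forall fun x => ?_)
  have hcg : 0 ≤ c * g x := mul_nonneg hc (hgnn x)
  have hnn : 0 ≤ h (c * g x) := by
    have := hmono.monotone hcg; rwa [h0] at this
  rw [Real.norm_eq_abs, abs_of_nonneg (mul_nonneg hnn (hgnn x))]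
  have h1 : h (c * g x) ≤ C₁ + C₂ * (c * g x) ^ r := hgrow _ hcg
  have h2 : (c * g x) ^ r = c ^ r * g x ^ r := Real.mul_rpow hc (hgnn x)
  have key : g x ^ r * g x = g x ^ p' := by
    rcases eq_or_lt_of_le (hgnn x) with hx | hx
    · rw [← hx, Real.zero_rpow (ne_of_gt hp'pos), Real.zero_rpow (ne_of_gt hrpos), zero_mul]
    · have hpr : p' = r + 1 := by rw [hp', hr]; field_simp; ring
      rw [hpr, Real.rpow_add hx, Real.rpow_one]
  calc h (c * g x) * g x ≤ (C₁ + C₂ * (c ^ r * g x ^ r)) * g x := by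
        rw [← h2]; exact mul_le_mul_of_nonneg_right h1 (hgnn x)
    _ = C₁ * g x + (C₂ * c ^ r) * (g x ^ r * g x) := by ring
    _ = C₁ * g x + (C₂ * c ^ r) * g x ^ p' := by rw [key]

lemma my_cont (hp : 2 < p)
    (hcont : Continuous h) (hmono : StrictMono h) (h0 : h 0 = 0)
    (hC₁ : 0 ≤ C₁) (hC₂ : 0 ≤ C₂)
    (hgrow : ∀ σ : ℝ, 0 ≤ σ → h σ ≤ C₁ + C₂ * σ ^ (1/(p-1)))
    (hgm : AEStronglyMeasurable g μ) (hgnn : ∀ x, 0 ≤ g x)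
    (hgmem : MemLp g (ENNReal.ofReal (p/(p-1))) μ) :
    ∀ t₀ : ℝ, 0 < t₀ → t₀ < 2 → ContinuousAt (fun t => ∫ x, h (t * g x) * g x ∂μ) t₀ := by
  intro t₀ h0t ht2
  have hint2 := my_int hp hcont hmono h0 hC₁ hC₂ hgrow hgm hgnn hgmem 2 (by norm_num)
  apply continuousAt_of_dominated (bound := fun x => h (2 * g x) * g x)
  · exact Filter.Eventually.of_forall fun t =>
      (hcont.comp_aestronglyMeasurable (hgm.const_mul t)).mul hgm
  · have hmem : Set.Ioo (0:ℝ) 2 ∈ nhds t₀ := Ioo_mem_nhds h0t ht2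
    filter_upwards [hmem] with t ht
    refine Filter.Eventually.of_forall fun x => ?_
    have htg : 0 ≤ t * g x := mul_nonneg ht.1.le (hgnn x)
    have hnn : 0 ≤ h (t * g x) := by
      have := hmono.monotone htg; rwa [h0] at this
    rw [Real.norm_eq_abs, abs_of_nonneg (mul_nonneg hnn (hgnn x))]
    apply mul_le_mul_of_nonneg_right _ (hgnn x)
    exact hmono.monotone (mul_le_mul_of_nonneg_right ht.2.le (hgnn x))
  · exact hint2
  · refine Filter.Eventually.of_forall fun x => ?_
    exact ((hcont.comp (continuous_id.mul continuous_const)).mul continuous_const).continuousAt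

lemma my_anti (hp : 2 < p)
    (hcont : Continuous h) (hmono : StrictMono h) (h0 : h 0 = 0)
    (hC₁ : 0 ≤ C₁) (hC₂ : 0 ≤ C₂)
    (hgrow : ∀ σ : ℝ, 0 ≤ σ → h σ ≤ C₁ + C₂ * σ ^ (1/(p-1)))
    (hgm : AEStronglyMeasurable g μ) (hgnn : ∀ x, 0 ≤ g x)
    (hgmem : MemLp g (ENNReal.ofReal (p/(p-1))) μ)
    (hratio : ∀ σ₁ σ₂ : ℝ, 0 < σ₁ → σ₁ < σ₂ → h σ₂ / σ₂ < h σ₁ / σ₁)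
    (hposmeas : 0 < μ {x | 0 < g x}) :
    ∀ t₁ t₂ : ℝ, 0 < t₁ → t₁ < t₂ →
      (∫ x, h (t₂ * g x) * g x ∂μ) / t₂ < (∫ x, h (t₁ * g x) * g x ∂μ) / t₁ := by
  intro t₁ t₂ ht₁ ht₁₂
  have ht₂ : 0 < t₂ := lt_trans ht₁ ht₁₂
  set D : X → ℝ := fun x => (1/t₁) * (h (t₁ * g x) * g x) - (1/t₂) * (h (t₂ * g x) * g x) with hD
  have hDpos : ∀ x, 0 < g x → 0 < D x := by
    intro x hgx
    have hs1 : 0 < t₁ * g x := mul_pos ht₁ hgx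
    have hs2 : t₁ * g x < t₂ * g x := mul_lt_mul_of_pos_right ht₁₂ hgx
    have hr := hratio (t₁ * g x) (t₂ * g x) hs1 hs2
    have e₁ : (1/t₁) * (h (t₁ * g x) * g x) = (h (t₁ * g x) / (t₁ * g x)) * g x ^ 2 := by
      field_simp
    have e₂ : (1/t₂) * (h (t₂ * g x) * g x) = (h (t₂ * g x) / (t₂ * g x)) * g x ^ 2 := by
      field_simp
    rw [hD]
    simp only
    rw [e₁, e₂, ← sub_mul]
    apply mul_pos (by linarith) (by positivity)
  have hDnn : ∀ x, 0 ≤ D x := by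
    intro x
    rcases eq_or_lt_of_le (hgnn x) with hx | hx
    · rw [hD]; simp only [← hx, mul_zero, h0, zero_mul, mul_zero, sub_zero]
      exact le_refl 0
    · exact (hDpos x hx).le
  have hint := my_int hp hcont hmono h0 hC₁ hC₂ hgrow hgm hgnn hgmem
  have hDint : Integrable D μ :=
    ((hint t₁ ht₁.le).const_mul _).sub ((hint t₂ ht₂.le).const_mul _)
  have hsupp : 0 < μ (Function.support D) := by
    apply lt_of_lt_of_le hposmeas
    apply measure_mono
    intro x hx
    exact ne_of_gt (hDpos x hx)
  have hDposint : 0 < ∫ x, D x ∂μ :=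
    (integral_pos_iff_support_of_nonneg_ae (Filter.Eventually.of_forall hDnn) hDint).mpr hsupp
  have hsplit : ∫ x, D x ∂μ = (1/t₁) * ∫ x, h (t₁ * g x) * g x ∂μ
      - (1/t₂) * ∫ x, h (t₂ * g x) * g x ∂μ := by
    rw [hD, integral_sub (((hint t₁ ht₁.le).const_mul _)) (((hint t₂ ht₂.le).const_mul _)),
      integral_const_mul, integral_const_mul]
  rw [hsplit] at hDposint
  rw [div_eq_inv_mul, div_eq_inv_mul, ← one_div, ← one_div]
  linarith

lemma my_big (hp : 2 < p)
    (hcont : Continuous h) (hmono : StrictMono h) (h0 : h 0 = 0)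
    (hC₁ : 0 ≤ C₁) (hC₂ : 0 ≤ C₂)
    (hgrow : ∀ σ : ℝ, 0 ≤ σ → h σ ≤ C₁ + C₂ * σ ^ (1/(p-1)))
    (hgsm : StronglyMeasurable g) (hgnn : ∀ x, 0 ≤ g x)
    (hgmem : MemLp g (ENNReal.ofReal (p/(p-1))) μ)
    (hlarge : ∀ M : ℝ, 0 < M → ∃ δ > 0, ∀ τ : ℝ, 0 < τ → τ < δ → M * τ ≤ h τ)
    (hposmeas : 0 < μ {x | 0 < g x}) :
    ∀ K : ℝ, ∃ t₁ ∈ Set.Ioo (0:ℝ) 1, K < (∫ x, h (t₁ * g x) * g x ∂μ) / t₁ := by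
  intro K
  -- find c > 0 with positive measure of {c ≤ g}
  obtain ⟨c, hcpos, hEpos⟩ : ∃ c : ℝ, 0 < c ∧ 0 < μ {x | c ≤ g x} := by
    by_contra hcon
    push_neg at hcon
    have hnull : ∀ n : ℕ, μ {x | 1/(n+1 : ℝ) ≤ g x} = 0 := by
      intro n
      have := hcon (1/(n+1 : ℝ)) (by positivity)
      exact le_antisymm this (zero_le)
    have hsub : {x | 0 < g x} ⊆ ⋃ n : ℕ, {x | 1/(n+1 : ℝ) ≤ g x} := by
      intro x hx
      obtain ⟨n, hn⟩ := exists_nat_one_div_lt (show (0:ℝ) < g x from hx)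
      exact Set.mem_iUnion.mpr ⟨n, le_of_lt hn⟩
    have : μ {x | 0 < g x} ≤ μ (⋃ n : ℕ, {x | 1/(n+1 : ℝ) ≤ g x}) := measure_mono hsub
    rw [measure_iUnion_null hnull] at this
    exact hposmeas.ne' (le_antisymm this (zero_le))
  set E := {x | c ≤ g x} with hE
  have hEmeas : MeasurableSet E := hgsm.measurable measurableSet_Ici
  have hEfin : μ E ≠ ⊤ := (measure_lt_top μ E).ne
  have hEtR : 0 < (μ E).toReal := ENNReal.toReal_pos (ne_of_gt hEpos) hEfin
  set M : ℝ := (|K| + 1) / (c^2 * (μ E).toReal) with hM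
  have hMpos : 0 < M := by rw [hM]; positivity
  obtain ⟨δ, hδ, hlg⟩ := hlarge M hMpos
  set t₁ : ℝ := min (δ/(2*c)) (1/2) with ht₁def
  have ht₁pos : 0 < t₁ := lt_min (by positivity) (by norm_num)
  have ht₁lt1 : t₁ < 1 := lt_of_le_of_lt (min_le_right _ _) (by norm_num)
  refine ⟨t₁, ⟨ht₁pos, ht₁lt1⟩, ?_⟩
  have htc : 0 < t₁ * c := mul_pos ht₁pos hcpos
  have htcδ : t₁ * c < δ := by
    have : t₁ ≤ δ/(2*c) := min_le_left _ _
    calc t₁ * c ≤ (δ/(2*c)) * c := mul_le_mul_of_nonneg_right this hcpos.le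
      _ = δ/2 := by field_simp
      _ < δ := by linarith
  have hhtc : M * (t₁ * c) ≤ h (t₁ * c) := hlg _ htc htcδ
  have hint := my_int hp hcont hmono h0 hC₁ hC₂ hgrow hgsm.aestronglyMeasurable hgnn hgmem
    t₁ ht₁pos.le
  have hnn : ∀ x, 0 ≤ h (t₁ * g x) * g x := by
    intro x
    have htg : 0 ≤ t₁ * g x := mul_nonneg ht₁pos.le (hgnn x)
    have := hmono.monotone htg; rw [h0] at this
    exact mul_nonneg this (hgnn x)
  have hlow : h (t₁ * c) * c * (μ E).toReal ≤ ∫ x in E, h (t₁ * g x) * g x ∂μ := by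
    rw [show h (t₁ * c) * c * (μ E).toReal = μ.real E • (h (t₁ * c) * c) by
      rw [smul_eq_mul, Measure.real, mul_comm]]
    apply setIntegral_ge_of_const_le hEmeas hEfin
    · intro x hx
      have hgx : c ≤ g x := hx
      have h1 : h (t₁ * c) ≤ h (t₁ * g x) :=
        hmono.monotone (mul_le_mul_of_nonneg_left hgx ht₁pos.le)
      have h2 : 0 ≤ h (t₁ * c) := by
        have := hmono.monotone htc.le; rwa [h0] at this
      exact mul_le_mul h1 hgx hcpos.le (le_trans h2 h1)
    · exact hint.integrableOn
  have hint_whole : ∫ x in E, h (t₁ * g x) * g x ∂μ ≤ ∫ x, h (t₁ * g x) * g x ∂μ :=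
    setIntegral_le_integral hint (Filter.Eventually.of_forall hnn)
  have hchain : t₁ * (|K| + 1) ≤ ∫ x, h (t₁ * g x) * g x ∂μ := by
    have h1 : M * (t₁ * c) * c * (μ E).toReal ≤ h (t₁ * c) * c * (μ E).toReal := by
      apply mul_le_mul_of_nonneg_right (mul_le_mul_of_nonneg_right hhtc hcpos.le) hEtR.le
    have h2 : M * (t₁ * c) * c * (μ E).toReal = t₁ * (|K| + 1) := by
      rw [hM]; field_simp
    linarith
  rw [lt_div_iff₀ ht₁pos]
  calc K * t₁ ≤ |K| * t₁ := mul_le_mul_of_nonneg_right (le_abs_self K) ht₁pos.le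
    _ < (|K| + 1) * t₁ := by nlinarith
    _ = t₁ * (|K| + 1) := by ring
    _ ≤ _ := hchain

end meas

set_option maxHeartbeats 1000000 in
theorem stmt_17 (N : ℕ) (Ω : Set (Fin N → ℝ)) (hΩmeas : MeasurableSet Ω)
    (hΩpos : 0 < volume Ω) (hΩfin : volume Ω < ⊤)
    (f h : ℝ → ℝ) (c₀ p b₀ q : ℝ)
    (hf1 : ContDiff ℝ 1 f) (hf01 : f 0 = 0) (hf02 : deriv f 0 = 0)
    (hf2 : ∀ t : ℝ, f (-t) = - f t)
    (hc₀ : 0 < c₀) (hp : 2 < p)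
    (hf3 : Filter.Tendsto (fun t : ℝ => f t / t ^ (p - 1)) Filter.atTop (nhds c₀))
    (hb₀ : 0 < b₀) (hq2 : 2 < q) (hqp : q ≤ p)
    (hf4 : Filter.Tendsto (fun t : ℝ => f t / t ^ (q - 1))
      (nhdsWithin 0 (Set.Ioi 0)) (nhds b₀))
    (hf5 : StrictMonoOn (fun t : ℝ => f t / t) (Set.Ioi 0))
    (hhf : Function.LeftInverse h f) (hfh : Function.RightInverse h f)
    [Fact (1 ≤ ENNReal.ofReal (p / (p - 1)))] [Fact (1 ≤ ENNReal.ofReal p)]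
    (T : Lp ℝ (ENNReal.ofReal (p / (p - 1))) (volume.restrict Ω) →L[ℝ] Lp ℝ (ENNReal.ofReal p) (volume.restrict Ω))
    (hsym : ∀ u v : Lp ℝ (ENNReal.ofReal (p / (p - 1))) (volume.restrict Ω),
      ∫ x, u x * T v x ∂(volume.restrict Ω) = ∫ x, v x * T u x ∂(volume.restrict Ω))
    (hTpos : ∀ v : Lp ℝ (ENNReal.ofReal (p / (p - 1))) (volume.restrict Ω), v ≠ 0 → 0 < ∫ x, v x * T v x ∂(volume.restrict Ω))
    (hTimp : ∀ v : Lp ℝ (ENNReal.ofReal (p / (p - 1))) (volume.restrict Ω), 0 ≤ v → v ≠ 0 → ∀ᵐ x ∂(volume.restrict Ω), 0 < T v x)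
    (v : Lp ℝ (ENNReal.ofReal (p / (p - 1))) (volume.restrict Ω)) (hvp : v ⊔ 0 ≠ 0) (hvm : v ⊓ 0 ≠ 0)
    (hineq1 : (∫ x, h (v x) * (v ⊔ 0) x ∂(volume.restrict Ω)) - ∫ x, (v ⊔ 0) x * T v x ∂(volume.restrict Ω) ≤ 0)
    (hineq2 : (∫ x, h (v x) * (v ⊓ 0) x ∂(volume.restrict Ω)) - ∫ x, (v ⊓ 0) x * T v x ∂(volume.restrict Ω) ≤ 0) :
    ∃ t s : ℝ, t ∈ Set.Ioc (0:ℝ) 1 ∧ s ∈ Set.Ioc (0:ℝ) 1 ∧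
      t • (v ⊔ 0) + s • (v ⊓ 0) ∈
        {w : Lp ℝ (ENNReal.ofReal (p / (p - 1))) (volume.restrict Ω) | w ⊔ 0 ≠ 0 ∧ w ⊓ 0 ≠ 0 ∧
          (∫ x, h (w x) * (w ⊔ 0) x ∂(volume.restrict Ω) = ∫ x, (w ⊔ 0) x * T w x ∂(volume.restrict Ω)) ∧
          (∫ x, h (w x) * (w ⊓ 0) x ∂(volume.restrict Ω) = ∫ x, (w ⊓ 0) x * T w x ∂(volume.restrict Ω))} := by
  classical
  haveI hfinmeas : IsFiniteMeasure (volume.restrict Ω) :=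
    ⟨by rwa [Measure.restrict_apply_univ]⟩
  -- h facts
  have hfm : StrictMono f := my_f_strictMono hf1 hf01 hb₀ hq2 hf4 hhf
  obtain ⟨hhm, hhcont⟩ := my_h_strictMono_cont hfm hhf hfh
  have hh0 : h 0 = 0 := my_h_zero hf01 hhf
  have hhodd := my_h_odd hf2 hfm hhf hfh
  have hratio := my_h_ratio hf5 hfm hf01 hhf hfh
  obtain ⟨C₁, C₂, hC₁, hC₂, hgrow⟩ := my_h_growth hc₀ hp hf3 hfh
  have hlarge := my_h_large hb₀ hq2 hf4 hfm hf01 hhf hfh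
  -- real-valued representatives
  set V : (Fin N → ℝ) → ℝ := ⇑v with hVdef
  set Up : (Fin N → ℝ) → ℝ := fun x => max (V x) 0 with hUpdef
  set Um : (Fin N → ℝ) → ℝ := fun x => min (V x) 0 with hUmdef
  set W : (Fin N → ℝ) → ℝ := fun x => -Um x with hWdef
  have hu : (⇑(v ⊔ 0) : (Fin N → ℝ) → ℝ) =ᵐ[volume.restrict Ω] Up := by
    filter_upwards [Lp.coeFn_sup v (0 : Lp ℝ (ENNReal.ofReal (p / (p - 1))) (volume.restrict Ω)),
      Lp.coeFn_zero ℝ (ENNReal.ofReal (p / (p - 1))) (volume.restrict Ω)] with x h1 h2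
    rw [h1, Pi.sup_apply, h2, Pi.zero_apply, hUpdef]
  have hz : (⇑(v ⊓ 0) : (Fin N → ℝ) → ℝ) =ᵐ[volume.restrict Ω] Um := by
    filter_upwards [Lp.coeFn_inf v (0 : Lp ℝ (ENNReal.ofReal (p / (p - 1))) (volume.restrict Ω)),
      Lp.coeFn_zero ℝ (ENNReal.ofReal (p / (p - 1))) (volume.restrict Ω)] with x h1 h2
    rw [h1, Pi.inf_apply, h2, Pi.zero_apply, hUmdef]
  have hVsm : StronglyMeasurable V := Lp.stronglyMeasurable v
  have hUpsm : StronglyMeasurable Up :=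
    (hVsm.measurable.max measurable_const).stronglyMeasurable
  have hUmsm : StronglyMeasurable Um :=
    (hVsm.measurable.min measurable_const).stronglyMeasurable
  have hWsm : StronglyMeasurable W := (hUmsm.measurable.neg).stronglyMeasurable
  have hUpnn : ∀ x, 0 ≤ Up x := fun x => le_max_right _ _
  have hWnn : ∀ x, 0 ≤ W x := fun x => by
    rw [hWdef]; simp only [neg_nonneg]; exact min_le_right _ _
  have hUmnp : ∀ x, Um x ≤ 0 := fun x => min_le_right _ _
  have hUpmem : MemLp Up (ENNReal.ofReal (p / (p - 1))) (volume.restrict Ω) :=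
    (memLp_congr_ae hu).mp (Lp.memLp (v ⊔ 0))
  have hUmmem : MemLp Um (ENNReal.ofReal (p / (p - 1))) (volume.restrict Ω) :=
    (memLp_congr_ae hz).mp (Lp.memLp (v ⊓ 0))
  have hWmem : MemLp W (ENNReal.ofReal (p / (p - 1))) (volume.restrict Ω) := hUmmem.neg
  -- positive measure sets
  have haux : ∀ (g : (Fin N → ℝ) → ℝ), (∀ x, 0 ≤ g x) → ¬ (g =ᵐ[volume.restrict Ω] 0) →
      0 < (volume.restrict Ω) {x | 0 < g x} := by
    intro g hgnn hgne
    rw [pos_iff_ne_zero]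
    intro hcon
    apply hgne
    have : ∀ᵐ x ∂(volume.restrict Ω), g x = 0 := by
      rw [ae_iff]
      convert hcon using 2
      ext x
      simp only [Set.mem_setOf_eq]
      constructor
      · intro hx; exact lt_of_le_of_ne (hgnn x) (Ne.symm hx)
      · intro hx; exact ne_of_gt hx
    exact this
  have hUppos : 0 < (volume.restrict Ω) {x | 0 < Up x} := by
    apply haux Up hUpnn
    intro hcon
    apply hvp
    rw [Lp.eq_zero_iff_ae_eq_zero]
    exact hu.trans hcon
  have hWpos : 0 < (volume.restrict Ω) {x | 0 < W x} := by
    apply haux W hWnn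
    intro hcon
    apply hvm
    rw [Lp.eq_zero_iff_ae_eq_zero]
    refine hz.trans ?_
    filter_upwards [hcon] with x hx
    have hx' : -Um x = 0 := hx
    have := neg_eq_zero.mp hx'
    rw [this]
    rfl
  -- quantities
  set A : ℝ → ℝ := fun t => ∫ x, h (t * Up x) * Up x ∂(volume.restrict Ω) with hAdef
  set B : ℝ → ℝ := fun s => ∫ x, h (s * W x) * W x ∂(volume.restrict Ω) with hBdef
  set α : ℝ := ∫ x, Up x * T (v ⊔ 0) x ∂(volume.restrict Ω) with hαdef
  set β : ℝ := ∫ x, Up x * T (v ⊓ 0) x ∂(volume.restrict Ω) with hβdef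
  set γ : ℝ := ∫ x, Um x * T (v ⊓ 0) x ∂(volume.restrict Ω) with hγdef
  have hαint : Integrable (fun x => Up x * T (v ⊔ 0) x) (volume.restrict Ω) :=
    my_holder hp hUpmem (Lp.memLp (T (v ⊔ 0)))
  have hβint : Integrable (fun x => Up x * T (v ⊓ 0) x) (volume.restrict Ω) :=
    my_holder hp hUpmem (Lp.memLp (T (v ⊓ 0)))
  have hγint : Integrable (fun x => Um x * T (v ⊓ 0) x) (volume.restrict Ω) :=
    my_holder hp hUmmem (Lp.memLp (T (v ⊓ 0)))
  have hUmTuint : Integrable (fun x => Um x * T (v ⊔ 0) x) (volume.restrict Ω) :=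
    my_holder hp hUmmem (Lp.memLp (T (v ⊔ 0)))
  -- β < 0
  have hTzneg : ∀ᵐ x ∂(volume.restrict Ω), T (v ⊓ 0) x < 0 := by
    have hz'nn : (0 : Lp ℝ (ENNReal.ofReal (p / (p - 1))) (volume.restrict Ω)) ≤ -(v ⊓ 0) := by
      rw [← Lp.coeFn_nonneg]
      filter_upwards [Lp.coeFn_neg (v ⊓ 0), hz] with x h1 h2
      rw [Pi.zero_apply, h1, Pi.neg_apply, h2]
      simp only [neg_nonneg]
      exact hUmnp x
    have hz'ne : -(v ⊓ 0) ≠ 0 := fun hcon => hvm (neg_eq_zero.mp hcon)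
    have himp := hTimp (-(v ⊓ 0)) hz'nn hz'ne
    rw [map_neg] at himp
    filter_upwards [himp, Lp.coeFn_neg (T (v ⊓ 0))] with x h1 h2
    rw [h2] at h1
    simp only [Pi.neg_apply] at h1
    linarith
  have hβneg : β < 0 := by
    have hJint : Integrable (fun x => Up x * (-(T (v ⊓ 0) x))) (volume.restrict Ω) := by
      have := hβint.neg
      refine this.congr (Filter.Eventually.of_forall fun x => ?_)
      simp [mul_neg]
    have hJ : 0 < ∫ x, Up x * (-(T (v ⊓ 0) x)) ∂(volume.restrict Ω) := by
      apply (integral_pos_iff_support_of_nonneg_ae ?_ hJint).mpr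
      · have hsub : {x | 0 < Up x} ∩ {x | T (v ⊓ 0) x < 0} ⊆
            Function.support fun x => Up x * (-(T (v ⊓ 0) x)) := by
          intro x hx
          obtain ⟨hx1, hx2⟩ := hx
          simp only [Set.mem_setOf_eq] at hx1 hx2
          exact ne_of_gt (mul_pos hx1 (by linarith))
        have hmeq : (volume.restrict Ω) ({x | 0 < Up x} ∩ {x | T (v ⊓ 0) x < 0})
            = (volume.restrict Ω) {x | 0 < Up x} := by
          apply measure_inter_conull
          rw [ae_iff] at hTzneg
          convert hTzneg using 2
          rfl
        calc (0:ℝ≥0∞) < (volume.restrict Ω) {x | 0 < Up x} := hUppos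
          _ = (volume.restrict Ω) ({x | 0 < Up x} ∩ {x | T (v ⊓ 0) x < 0}) := hmeq.symm
          _ ≤ (volume.restrict Ω) (Function.support fun x => Up x * (-(T (v ⊓ 0) x))) :=
              measure_mono hsub
      · filter_upwards [hTzneg] with x hx
        exact mul_nonneg (hUpnn x) (by linarith)
    have hJeq : ∫ x, Up x * (-(T (v ⊓ 0) x)) ∂(volume.restrict Ω) = -β := by
      rw [hβdef, ← integral_neg]
      apply integral_congr_ae
      exact Filter.Eventually.of_forall fun x => by simp [mul_neg]
    rw [hJeq] at hJ
    linarith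
  -- hypotheses of key_real
  have hAcont : ∀ t ∈ Set.Ioc (0:ℝ) 1, ContinuousAt A t := by
    intro t ht
    exact my_cont hp hhcont hhm hh0 hC₁ hC₂ hgrow hUpsm.aestronglyMeasurable hUpnn hUpmem
      t ht.1 (by linarith [ht.2])
  have hBcont : ∀ s ∈ Set.Ioc (0:ℝ) 1, ContinuousAt B s := by
    intro s hs
    exact my_cont hp hhcont hhm hh0 hC₁ hC₂ hgrow hWsm.aestronglyMeasurable hWnn hWmem
      s hs.1 (by linarith [hs.2])
  have hBmono : ∀ s₁ ∈ Set.Ioc (0:ℝ) 1, ∀ s₂ ∈ Set.Ioc (0:ℝ) 1, s₁ < s₂ →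
      B s₂ / s₂ < B s₁ / s₁ := by
    intro s₁ hs₁ s₂ hs₂ h12
    exact my_anti hp hhcont hhm hh0 hC₁ hC₂ hgrow hWsm.aestronglyMeasurable hWnn hWmem
      hratio hWpos s₁ s₂ hs₁.1 h12
  have hBpos : ∀ s ∈ Set.Ioc (0:ℝ) 1, 0 ≤ B s := by
    intro s hs
    apply integral_nonneg
    intro x
    have : 0 ≤ h (s * W x) := by
      have := hhm.monotone (mul_nonneg hs.1.le (hWnn x)); rwa [hh0] at this
    exact mul_nonneg this (hWnn x)
  have hAbig : ∃ t₁ ∈ Set.Ioo (0:ℝ) 1, α < A t₁ / t₁ :=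
    my_big hp hhcont hhm hh0 hC₁ hC₂ hgrow hUpsm hUpnn hUpmem hlarge hUppos α
  -- rewrite hineq1 / hineq2
  have huz : (v ⊔ 0) + (v ⊓ 0) = v := by
    apply Lp.ext
    filter_upwards [Lp.coeFn_add (v ⊔ 0) (v ⊓ 0), hu, hz] with x h1 h2 h3
    rw [h1, Pi.add_apply, h2, h3, hUpdef, hUmdef]
    simp only
    rw [max_add_min]
    rw [hVdef]
    exact add_zero _
  have hsplitV : ∀ (F : (Fin N → ℝ) → ℝ),
      Integrable (fun x => F x * T (v ⊔ 0) x) (volume.restrict Ω) →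
      Integrable (fun x => F x * T (v ⊓ 0) x) (volume.restrict Ω) →
      ∫ x, F x * T v x ∂(volume.restrict Ω)
        = (∫ x, F x * T (v ⊔ 0) x ∂(volume.restrict Ω))
          + ∫ x, F x * T (v ⊓ 0) x ∂(volume.restrict Ω) := by
    intro F hint1 hint2
    conv_lhs => rw [← huz]
    have hTuz : T ((v ⊔ 0) + (v ⊓ 0)) = T (v ⊔ 0) + T (v ⊓ 0) := map_add T _ _
    rw [hTuz]
    rw [show (∫ x, F x * (T (v ⊔ 0) + T (v ⊓ 0)) x ∂(volume.restrict Ω))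
        = ∫ x, (F x * T (v ⊔ 0) x + F x * T (v ⊓ 0) x) ∂(volume.restrict Ω) from
      integral_congr_ae ?_]
    · exact integral_add hint1 hint2
    · filter_upwards [Lp.coeFn_add (T (v ⊔ 0)) (T (v ⊓ 0))] with x h1
      rw [h1, Pi.add_apply]
      ring
  have hA1 : A 1 ≤ α + β := by
    have e1 : ∫ x, h (V x) * (v ⊔ 0) x ∂(volume.restrict Ω) = A 1 := by
      rw [hAdef]
      apply integral_congr_ae
      filter_upwards [hu] with x hux
      rw [hux, hUpdef]
      simp only [one_mul]
      rcases le_or_gt (V x) 0 with hc | hc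
      · rw [max_eq_right hc]; simp [hh0]
      · rw [max_eq_left hc.le]
    have e2 : ∫ x, (v ⊔ 0) x * T v x ∂(volume.restrict Ω) = α + β := by
      have e2' : ∫ x, (v ⊔ 0) x * T v x ∂(volume.restrict Ω)
          = ∫ x, Up x * T v x ∂(volume.restrict Ω) := by
        apply integral_congr_ae
        filter_upwards [hu] with x hux
        rw [hux]
      rw [e2', hsplitV Up hαint hβint]
    have hh := hineq1
    rw [e1, e2] at hh
    linarith
  have hB1 : B 1 ≤ γ + β := by
    have e1 : ∫ x, h (V x) * (v ⊓ 0) x ∂(volume.restrict Ω) = B 1 := by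
      rw [hBdef]
      apply integral_congr_ae
      filter_upwards [hz] with x hzx
      rw [hzx, hWdef, hUmdef]
      simp only [one_mul]
      rcases le_or_gt (V x) 0 with hc | hc
      · rw [min_eq_left hc, hhodd]
        ring
      · rw [min_eq_right hc.le]
        simp [hh0]
    have e2 : ∫ x, (v ⊓ 0) x * T v x ∂(volume.restrict Ω) = β + γ := by
      have e2' : ∫ x, (v ⊓ 0) x * T v x ∂(volume.restrict Ω)
          = ∫ x, Um x * T v x ∂(volume.restrict Ω) := by
        apply integral_congr_ae
        filter_upwards [hz] with x hzx
        rw [hzx]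
      have hUmTu : ∫ x, Um x * T (v ⊔ 0) x ∂(volume.restrict Ω) = β := by
        have s1 : ∫ x, Um x * T (v ⊔ 0) x ∂(volume.restrict Ω)
            = ∫ x, (v ⊓ 0) x * T (v ⊔ 0) x ∂(volume.restrict Ω) := by
          apply integral_congr_ae
          filter_upwards [hz] with x hzx
          rw [hzx]
        have s2 : ∫ x, (v ⊓ 0) x * T (v ⊔ 0) x ∂(volume.restrict Ω)
            = ∫ x, (v ⊔ 0) x * T (v ⊓ 0) x ∂(volume.restrict Ω) := (hsym (v ⊔ 0) (v ⊓ 0)).symm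
        have s3 : ∫ x, (v ⊔ 0) x * T (v ⊓ 0) x ∂(volume.restrict Ω) = β := by
          rw [hβdef]
          apply integral_congr_ae
          filter_upwards [hu] with x hux
          rw [hux]
        rw [s1, s2, s3]
      rw [e2', hsplitV Um hUmTuint hγint, hUmTu]
    have hh := hineq2
    rw [e1, e2] at hh
    linarith
  -- apply key_real
  obtain ⟨t, ht, s, hs, heq1, heq2⟩ :=
    key_real A B α β γ hAcont hBcont hBmono hBpos hβneg hA1 hB1 hAbig
  refine ⟨t, s, ht, hs, ?_⟩
  simp only [Set.mem_setOf_eq]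
  have hw : (⇑(t • (v ⊔ 0) + s • (v ⊓ 0)) : (Fin N → ℝ) → ℝ) =ᵐ[volume.restrict Ω]
      fun x => t * Up x + s * Um x := by
    filter_upwards [Lp.coeFn_add (t • (v ⊔ 0)) (s • (v ⊓ 0)), Lp.coeFn_smul t (v ⊔ 0),
      Lp.coeFn_smul s (v ⊓ 0), hu, hz] with x h1 h2 h3 h4 h5
    rw [h1, Pi.add_apply, h2, h3, Pi.smul_apply, Pi.smul_apply, smul_eq_mul, smul_eq_mul, h4, h5]
  have hwsup : (t • (v ⊔ 0) + s • (v ⊓ 0)) ⊔ 0 = t • (v ⊔ 0) := by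
    apply Lp.ext
    filter_upwards [Lp.coeFn_sup (t • (v ⊔ 0) + s • (v ⊓ 0))
        (0 : Lp ℝ (ENNReal.ofReal (p / (p - 1))) (volume.restrict Ω)),
      Lp.coeFn_zero ℝ (ENNReal.ofReal (p / (p - 1))) (volume.restrict Ω), hw,
      Lp.coeFn_smul t (v ⊔ 0), hu] with x h1 h2 h3 h4 h5
    rw [h1, Pi.sup_apply, h2, Pi.zero_apply, h3, h4, Pi.smul_apply, smul_eq_mul, h5]
    rw [hUpdef, hUmdef]
    beta_reduce
    rcases le_or_gt (V x) 0 with hc | hc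
    · rw [max_eq_right hc, min_eq_left hc, mul_zero, zero_add]
      rw [max_eq_right (mul_nonpos_of_nonneg_of_nonpos hs.1.le hc)]
    · rw [max_eq_left hc.le, min_eq_right hc.le, mul_zero, add_zero]
      rw [max_eq_left (mul_nonneg ht.1.le hc.le)]
  have hwinf : (t • (v ⊔ 0) + s • (v ⊓ 0)) ⊓ 0 = s • (v ⊓ 0) := by
    apply Lp.ext
    filter_upwards [Lp.coeFn_inf (t • (v ⊔ 0) + s • (v ⊓ 0))
        (0 : Lp ℝ (ENNReal.ofReal (p / (p - 1))) (volume.restrict Ω)),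
      Lp.coeFn_zero ℝ (ENNReal.ofReal (p / (p - 1))) (volume.restrict Ω), hw,
      Lp.coeFn_smul s (v ⊓ 0), hz] with x h1 h2 h3 h4 h5
    rw [h1, Pi.inf_apply, h2, Pi.zero_apply, h3, h4, Pi.smul_apply, smul_eq_mul, h5]
    rw [hUpdef, hUmdef]
    beta_reduce
    rcases le_or_gt (V x) 0 with hc | hc
    · rw [max_eq_right hc, min_eq_left hc, mul_zero, zero_add]
      rw [min_eq_left (mul_nonpos_of_nonneg_of_nonpos hs.1.le hc)]
    · rw [max_eq_left hc.le, min_eq_right hc.le, mul_zero, add_zero]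
      rw [min_eq_right (mul_nonneg ht.1.le hc.le)]
  have hTw : T (t • (v ⊔ 0) + s • (v ⊓ 0)) = t • T (v ⊔ 0) + s • T (v ⊓ 0) := by
    rw [map_add]
    rw [ContinuousLinearMap.map_smul, ContinuousLinearMap.map_smul]
  have hTwcoe : (⇑(T (t • (v ⊔ 0) + s • (v ⊓ 0))) : (Fin N → ℝ) → ℝ) =ᵐ[volume.restrict Ω]
      fun x => t * T (v ⊔ 0) x + s * T (v ⊓ 0) x := by
    rw [hTw]
    filter_upwards [Lp.coeFn_add (t • T (v ⊔ 0)) (s • T (v ⊓ 0)), Lp.coeFn_smul t (T (v ⊔ 0)),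
      Lp.coeFn_smul s (T (v ⊓ 0))] with x h1 h2 h3
    rw [h1, Pi.add_apply, h2, h3, Pi.smul_apply, Pi.smul_apply, smul_eq_mul, smul_eq_mul]
  refine ⟨?_, ?_, ?_, ?_⟩
  · rw [hwsup]
    exact smul_ne_zero (ne_of_gt ht.1) hvp
  · rw [hwinf]
    exact smul_ne_zero (ne_of_gt hs.1) hvm
  · -- first equality
    have lhs1 : ∫ x, h ((t • (v ⊔ 0) + s • (v ⊓ 0)) x) * ((t • (v ⊔ 0) + s • (v ⊓ 0)) ⊔ 0) x
        ∂(volume.restrict Ω) = t * A t := by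
      rw [hwsup, hAdef]
      simp only
      rw [← integral_const_mul]
      apply integral_congr_ae
      filter_upwards [hw, Lp.coeFn_smul t (v ⊔ 0), hu] with x h1 h2 h3
      rw [h1, h2, Pi.smul_apply, smul_eq_mul, h3, hUpdef, hUmdef]
      simp only
      rcases le_or_gt (V x) 0 with hc | hc
      · rw [max_eq_right hc]
        ring
      · rw [max_eq_left hc.le, min_eq_right hc.le, mul_zero, add_zero]
        ring
    have rhs1 : ∫ x, ((t • (v ⊔ 0) + s • (v ⊓ 0)) ⊔ 0) x * T (t • (v ⊔ 0) + s • (v ⊓ 0)) x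
        ∂(volume.restrict Ω) = t * t * α + t * s * β := by
      rw [hwsup]
      rw [show (∫ x, (t • (v ⊔ 0)) x * T (t • (v ⊔ 0) + s • (v ⊓ 0)) x ∂(volume.restrict Ω))
          = ∫ x, ((t*t) * (Up x * T (v ⊔ 0) x) + (t*s) * (Up x * T (v ⊓ 0) x))
            ∂(volume.restrict Ω) from integral_congr_ae ?_]
      · rw [integral_add (hαint.const_mul _) (hβint.const_mul _),
          integral_const_mul, integral_const_mul]
      · filter_upwards [Lp.coeFn_smul t (v ⊔ 0), hu, hTwcoe] with x h1 h2 h3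
        rw [h1, Pi.smul_apply, smul_eq_mul, h2, h3]
        ring
    rw [lhs1, rhs1]
    linear_combination t * heq1
  · -- second equality
    have lhs2 : ∫ x, h ((t • (v ⊔ 0) + s • (v ⊓ 0)) x) * ((t • (v ⊔ 0) + s • (v ⊓ 0)) ⊓ 0) x
        ∂(volume.restrict Ω) = s * B s := by
      rw [hwinf, hBdef]
      simp only
      rw [← integral_const_mul]
      apply integral_congr_ae
      filter_upwards [hw, Lp.coeFn_smul s (v ⊓ 0), hz] with x h1 h2 h3
      rw [h1, h2, Pi.smul_apply, smul_eq_mul, h3, hUpdef, hUmdef, hWdef, hUmdef]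
      simp only
      rcases le_or_gt (V x) 0 with hc | hc
      · rw [max_eq_right hc, min_eq_left hc, mul_zero, zero_add,
          show s * -V x = -(s * V x) by ring, hhodd]
        ring
      · rw [max_eq_left hc.le, min_eq_right hc.le]
        simp only [mul_zero, neg_zero, add_zero, zero_mul, hh0]
    have rhs2 : ∫ x, ((t • (v ⊔ 0) + s • (v ⊓ 0)) ⊓ 0) x * T (t • (v ⊔ 0) + s • (v ⊓ 0)) x
        ∂(volume.restrict Ω) = s * t * β + s * s * γ := by
      rw [hwinf]
      have hUmTu : ∫ x, Um x * T (v ⊔ 0) x ∂(volume.restrict Ω) = β := by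
        have s1 : ∫ x, Um x * T (v ⊔ 0) x ∂(volume.restrict Ω)
            = ∫ x, (v ⊓ 0) x * T (v ⊔ 0) x ∂(volume.restrict Ω) := by
          apply integral_congr_ae
          filter_upwards [hz] with x hzx
          rw [hzx]
        have s2 : ∫ x, (v ⊓ 0) x * T (v ⊔ 0) x ∂(volume.restrict Ω)
            = ∫ x, (v ⊔ 0) x * T (v ⊓ 0) x ∂(volume.restrict Ω) := (hsym (v ⊔ 0) (v ⊓ 0)).symm
        have s3 : ∫ x, (v ⊔ 0) x * T (v ⊓ 0) x ∂(volume.restrict Ω) = β := by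
          rw [hβdef]
          apply integral_congr_ae
          filter_upwards [hu] with x hux
          rw [hux]
        rw [s1, s2, s3]
      rw [show (∫ x, (s • (v ⊓ 0)) x * T (t • (v ⊔ 0) + s • (v ⊓ 0)) x ∂(volume.restrict Ω))
          = ∫ x, ((s*t) * (Um x * T (v ⊔ 0) x) + (s*s) * (Um x * T (v ⊓ 0) x))
            ∂(volume.restrict Ω) from integral_congr_ae ?_]
      · rw [integral_add (hUmTuint.const_mul _) (hγint.const_mul _),
          integral_const_mul, integral_const_mul, hUmTu]
      · filter_upwards [Lp.coeFn_smul s (v ⊓ 0), hz, hTwcoe] with x h1 h2 h3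
        rw [h1, Pi.smul_apply, smul_eq_mul, h2, h3]
        ring
    rw [lhs2, rhs2]
    linear_combination s * heq2
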